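/- Let ε > 0 and q ∈ [0,1], and define Φ(X) = (1+ε^q)·tr(Xᵀ(XXᵀ + εI)⁻¹X) for real n×n matrices X. Then for every real symmetric n×n matrix X and every real symmetric n×n direction H, the derivative at t = 0 of the function t ↦ Φ(X + tH) equals tr(Hᵀ·G), where G = 2ε(1+ε^q)·(XXᵀ + εI)⁻²·X; i.e., on symmetric matrices the gradient of Φ with respect to the Frobenius inner product is 2ε(1+ε^q)(XXᵀ + εI)⁻²X. -/

import Mathlib

open Matrix

attribute [local instance] Matrix.linftyOpNormedRing Matrix.linftyOpNormedAlgebra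

/-- The gradient formula for the singular-value rank surrogate
`Φ(X) = (1+ε^q)·tr(Xᵀ(XXᵀ + εI)⁻¹X)`: on symmetric matrices, the directional
derivative of `Φ` at `X` in a symmetric direction `H` equals `tr(Hᵀ G)` where
`G = 2ε(1+ε^q)·(XXᵀ + εI)⁻²·X`; i.e., `G` is the gradient of `Φ` with respect to the
Frobenius inner product. -/
theorem singular_value_relaxation_gradient
    {n : ℕ} (ε q : ℝ) (hε : 0 < ε) (hq0 : 0 ≤ q) (hq1 : q ≤ 1)
    (X H : Matrix (Fin n) (Fin n) ℝ) (hX : X.IsHermitian) (hH : H.IsHermitian) :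
    HasDerivAt
      (fun t : ℝ => (1 + ε ^ q) *
        ((X + t • H)ᵀ * ((X + t • H) * (X + t • H)ᵀ + ε • 1)⁻¹ * (X + t • H)).trace)
      ((Hᵀ * ((2 * ε * (1 + ε ^ q)) • ((((X * Xᵀ + ε • 1)⁻¹) ^ 2) * X))).trace)
      0 := by
  have hXT : Xᵀ = X := by
    have := hX; rwa [Matrix.IsHermitian, conjTranspose_eq_transpose_of_trivial] at this
  have hHT : Hᵀ = H := by
    have := hH; rwa [Matrix.IsHermitian, conjTranspose_eq_transpose_of_trivial] at this
  rw [hXT, hHT]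
  set c : ℝ := 1 + ε ^ q with hc
  set B : ℝ → Matrix (Fin n) (Fin n) ℝ := fun t => (X + t • H) * (X + t • H) + ε • 1 with hB
  have hBpos : ∀ t, (B t).PosDef := by
    intro t
    have h1 : ((X + t • H) * (X + t • H)ᴴ).PosSemidef := posSemidef_self_mul_conjTranspose _
    rw [conjTranspose_eq_transpose_of_trivial, transpose_add, transpose_smul, hXT, hHT] at h1
    refine Matrix.PosDef.posSemidef_add h1 ?_
    rw [smul_one_eq_diagonal]
    exact posDef_diagonal_iff.mpr fun _ => hε
  have hBdet : ∀ t, IsUnit (B t).det := fun t =>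
    (Matrix.isUnit_iff_isUnit_det _).mp (hBpos t).isUnit
  set M : Matrix (Fin n) (Fin n) ℝ := X * X + ε • 1 with hM
  have hB0 : B 0 = M := by simp [hB, hM]
  -- rewrite the function using the trace identity
  have hfun : (fun t : ℝ => c *
        ((X + t • H)ᵀ * ((X + t • H) * (X + t • H)ᵀ + ε • 1)⁻¹ * (X + t • H)).trace)
      = fun t : ℝ => c * ((n : ℝ) - ε * ((B t)⁻¹).trace) := by
    funext t
    have hAT : (X + t • H)ᵀ = X + t • H := by rw [transpose_add, transpose_smul, hXT, hHT]
    rw [hAT]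
    show c * ((X + t • H) * (B t)⁻¹ * (X + t • H)).trace = _
    congr 1
    have hAA : (X + t • H) * (X + t • H) = B t - ε • 1 := by
      rw [hB]; simp
    rw [trace_mul_comm, ← Matrix.mul_assoc, hAA, sub_mul, Matrix.smul_mul, Matrix.one_mul,
      Matrix.mul_nonsing_inv _ (hBdet t), trace_sub, trace_smul, trace_one]
    simp [smul_eq_mul]
  rw [hfun]
  -- derivative of B
  have hC : HasDerivAt B (H * X + X * H) 0 := by
    have h1 : HasDerivAt (fun t : ℝ => X + t • H) H 0 := by
      have h := ((hasDerivAt_id (0 : ℝ)).smul_const H).const_add X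
      simp only [id_eq, one_smul] at h; exact h
    have h2 := (h1.mul h1).add_const (ε • (1 : Matrix (Fin n) (Fin n) ℝ))
    simp only [Pi.mul_apply, zero_smul, add_zero] at h2; exact h2
  -- derivative of B⁻¹
  obtain ⟨u, hu⟩ := (hBpos 0).isUnit
  have huinv : (↑u⁻¹ : Matrix (Fin n) (Fin n) ℝ) = M⁻¹ := by
    rw [← hB0, Matrix.nonsing_inv_eq_ringInverse, ← hu, Ring.inverse_unit]
  have hinv : HasDerivAt (fun t => (B t)⁻¹) (-(M⁻¹ * (H * X + X * H) * M⁻¹)) 0 := by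
    have heq : (fun t => (B t)⁻¹) = fun t => Ring.inverse (B t) := by
      funext t; rw [Matrix.nonsing_inv_eq_ringInverse]
    rw [heq]
    have hF : HasFDerivAt Ring.inverse
        (-(ContinuousLinearMap.mulLeftRight ℝ (Matrix (Fin n) (Fin n) ℝ) ↑u⁻¹ ↑u⁻¹)) (B 0) := by
      rw [← hu]; exact hasFDerivAt_ringInverse u
    have h3 := hF.comp_hasDerivAt 0 hC
    simp [huinv, Function.comp_def, ContinuousLinearMap.mulLeftRight_apply] at h3; exact h3
  -- derivative of trace of B⁻¹
  have htr : HasDerivAt (fun t => ((B t)⁻¹).trace)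
      ((-(M⁻¹ * (H * X + X * H) * M⁻¹)).trace) 0 := by
    have h4 := ((Matrix.traceLinearMap (Fin n) ℝ ℝ).toContinuousLinearMap).hasFDerivAt.comp_hasDerivAt 0 hinv
    simp only [Function.comp_def] at h4; exact h4
  have hfinal : HasDerivAt (fun t => c * ((n : ℝ) - ε * ((B t)⁻¹).trace))
      (c * (-(ε * (-(M⁻¹ * (H * X + X * H) * M⁻¹)).trace))) 0 :=
    ((htr.const_mul ε).const_sub _).const_mul c
  convert hfinal using 1
  -- final trace identity
  have hMdet : IsUnit M.det := by rw [← hB0]; exact hBdet 0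
  have hcomm : X * M⁻¹ = M⁻¹ * X := by
    have h : X * M = M * X := by
      rw [hM, mul_add, add_mul, mul_smul_comm, smul_mul_assoc, mul_one, one_mul,
        Matrix.mul_assoc]
    calc X * M⁻¹ = (M⁻¹ * M) * (X * M⁻¹) := by
          rw [Matrix.nonsing_inv_mul _ hMdet, Matrix.one_mul]
      _ = M⁻¹ * ((M * X) * M⁻¹) := by
          rw [Matrix.mul_assoc, ← Matrix.mul_assoc M X M⁻¹]
      _ = M⁻¹ * ((X * M) * M⁻¹) := by rw [← h]
      _ = M⁻¹ * (X * (M * M⁻¹)) := by rw [Matrix.mul_assoc X M M⁻¹]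
      _ = M⁻¹ * X := by rw [Matrix.mul_nonsing_inv _ hMdet, Matrix.mul_one]
  have hsq : (M⁻¹) ^ 2 = M⁻¹ * M⁻¹ := sq M⁻¹
  have expand : M⁻¹ * (H * X + X * H) * M⁻¹
      = M⁻¹ * (H * X) * M⁻¹ + M⁻¹ * (X * H) * M⁻¹ := by
    rw [mul_add, add_mul]
  have hXc2 : X * (M⁻¹ * M⁻¹) = M⁻¹ * (M⁻¹ * X) := by
    rw [← Matrix.mul_assoc, hcomm, Matrix.mul_assoc, hcomm]
  have e1 : (M⁻¹ * (H * X) * M⁻¹).trace = (H * (M⁻¹ * M⁻¹ * X)).trace := by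
    rw [trace_mul_comm, ← Matrix.mul_assoc M⁻¹ M⁻¹ (H * X), trace_mul_comm,
      Matrix.mul_assoc H X (M⁻¹ * M⁻¹), hXc2, ← Matrix.mul_assoc M⁻¹ M⁻¹ X]
  have e2 : (M⁻¹ * (X * H) * M⁻¹).trace = (H * (M⁻¹ * M⁻¹ * X)).trace := by
    rw [trace_mul_comm, ← Matrix.mul_assoc M⁻¹ M⁻¹ (X * H),
      ← Matrix.mul_assoc (M⁻¹ * M⁻¹) X H, trace_mul_comm]
  rw [hsq, trace_neg, expand, trace_add, e1, e2, mul_smul_comm, trace_smul, smul_eq_mul]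
  ring
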